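/- Let α be a nonnegative random variable with distribution function F supported on [0,∞), survival function F̄ = 1 - F positive on [0,∞), and finite mean Eα. Suppose α is DGMRD (e(x) = m(x)/x is nonincreasing on (0,∞)) and let γ := lim_{x→∞} e(x) (which exists by monotonicity). Then for every constant β > 0: γ < 1/β if and only if E[α^{β+1}] < ∞. -/

import Mathlib

open MeasureTheory Set Filter Function Topology

noncomputable section

/-- The mean residual demand (MRD) function `m(x) = (1/F̄(x)) ∫_x^∞ F̄(u) du`. -/
def mrd (F : ℝ → ℝ) (x : ℝ) : ℝ :=
  (∫ u in Ioi x, (1 - F u)) / (1 - F x)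

/-- Iteration lemma, upper bound. -/
lemma iter_upper (L : ℝ → ℝ) (x0 δ : ℝ) (hx0 : 0 < x0) (hδ : 0 < δ)
    (hstep : ∀ x y : ℝ, x0 ≤ x → x ≤ y → L y * (1 + Real.log (y / x) / δ) ≤ L x) :
    ∀ x y : ℝ, x0 ≤ x → x ≤ y → L y * (y / x) ^ (1 / δ) ≤ L x := by
  intro x y hx hxy
  have hxpos : 0 < x := lt_of_lt_of_le hx0 hx
  have hypos : 0 < y := lt_of_lt_of_le hxpos hxy
  have hr : 1 ≤ y / x := (one_le_div hxpos).2 hxy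
  set z : ℝ := Real.log (y / x) with hz
  have hznn : 0 ≤ z := Real.log_nonneg hr
  -- key: ∀ n ≥ 1, L y * (1 + (z/δ)/n)^n ≤ L x
  have key : ∀ n : ℕ, 1 ≤ n → L y * (1 + (z / δ) / n) ^ n ≤ L x := by
    intro n hn
    have hnpos : (0:ℝ) < n := by exact_mod_cast hn
    -- points x_k = x * (y/x)^(k/n)
    set r : ℝ := (y / x) ^ ((n:ℝ)⁻¹) with hrdef
    have hr1 : 1 ≤ r := Real.one_le_rpow hr (by positivity)
    have hrpos : 0 < r := lt_of_lt_of_le one_pos hr1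
    have hlogr : Real.log r = z / n := by
      rw [hrdef, Real.log_rpow (lt_of_lt_of_le one_pos hr), hz]
      ring
    have hq : 0 < 1 + (z / δ) / n := by positivity
    have step : ∀ k : ℕ, L (x * r ^ (k+1)) * (1 + (z/δ)/n) ≤ L (x * r ^ k) := by
      intro k
      have hk : (0:ℝ) < r ^ k := pow_pos hrpos k
      have hxk : x0 ≤ x * r ^ k := by
        calc x0 ≤ x := hx
        _ ≤ x * r ^ k := le_mul_of_one_le_right hxpos.le (one_le_pow₀ hr1)
      have hmono : x * r ^ k ≤ x * r ^ (k+1) := by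
        apply mul_le_mul_of_nonneg_left _ hxpos.le
        exact pow_le_pow_right₀ hr1 (Nat.le_succ k)
      have := hstep (x * r ^ k) (x * r ^ (k+1)) hxk hmono
      have hratio : (x * r ^ (k+1)) / (x * r ^ k) = r := by
        field_simp
        ring
      rw [hratio] at this
      rw [hlogr] at this
      convert this using 3
      ring
    have ind : ∀ k : ℕ, L (x * r ^ k) * (1 + (z/δ)/n) ^ k ≤ L x := by
      intro k
      induction k with
      | zero => simp
      | succ k ih =>
        calc L (x * r ^ (k+1)) * (1 + (z/δ)/n) ^ (k+1)
            = (L (x * r ^ (k+1)) * (1 + (z/δ)/n)) * (1 + (z/δ)/n) ^ k := by ring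
          _ ≤ L (x * r ^ k) * (1 + (z/δ)/n) ^ k := by
              apply mul_le_mul_of_nonneg_right (step k) (le_of_lt (pow_pos hq k))
          _ ≤ L x := ih
    have hxn : x * r ^ n = y := by
      have : r ^ (n:ℕ) = y / x := by
        rw [hrdef, ← Real.rpow_natCast ((y/x) ^ ((n:ℝ)⁻¹)) n, ← Real.rpow_mul (by positivity)]
        rw [inv_mul_cancel₀ (ne_of_gt hnpos), Real.rpow_one]
      rw [this]
      field_simp
    have := ind n
    rwa [hxn] at this
  -- take the limit
  have hlim : Tendsto (fun n : ℕ => L y * (1 + (z/δ)/n) ^ n) atTop (𝓝 (L y * Real.exp (z/δ))) :=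
    Tendsto.const_mul _ (Real.tendsto_one_add_div_pow_exp (z/δ))
  have hle : L y * Real.exp (z/δ) ≤ L x := by
    apply le_of_tendsto hlim
    filter_upwards [eventually_ge_atTop 1] with n hn using key n hn
  have : Real.exp (z/δ) = (y/x) ^ (1/δ) := by
    rw [Real.rpow_def_of_pos (by positivity), hz]
    ring_nf
  rwa [this] at hle


lemma iter_lower (L : ℝ → ℝ) (x0 β : ℝ) (hx0 : 0 < x0) (hβ : 0 < β)
    (hLnn : ∀ x : ℝ, x0 ≤ x → 0 ≤ L x)
    (hstep : ∀ x y : ℝ, x0 ≤ x → x ≤ y → L x - L y ≤ β * L x * Real.log (y / x)) :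
    ∀ x y : ℝ, x0 ≤ x → x ≤ y → L x * (y / x) ^ (-β) ≤ L y := by
  intro x y hx hxy
  have hxpos : 0 < x := lt_of_lt_of_le hx0 hx
  have hr : 1 ≤ y / x := (one_le_div hxpos).2 hxy
  set z : ℝ := Real.log (y / x) with hz
  have hznn : 0 ≤ z := Real.log_nonneg hr
  have key : ∀ n : ℕ, 1 ≤ n → 0 < 1 + (-(β * z)) / n →
      L x * (1 + (-(β * z)) / n) ^ n ≤ L y := by
    intro n hn hq
    have hnpos : (0:ℝ) < n := by exact_mod_cast hn
    set r : ℝ := (y / x) ^ ((n:ℝ)⁻¹) with hrdef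
    have hr1 : 1 ≤ r := Real.one_le_rpow hr (by positivity)
    have hrpos : 0 < r := lt_of_lt_of_le one_pos hr1
    have hlogr : Real.log r = z / n := by
      rw [hrdef, Real.log_rpow (lt_of_lt_of_le one_pos hr), hz]; ring
    have step : ∀ k : ℕ, L (x * r ^ k) * (1 + (-(β * z)) / n) ≤ L (x * r ^ (k+1)) := by
      intro k
      have hxk : x0 ≤ x * r ^ k := by
        calc x0 ≤ x := hx
        _ ≤ x * r ^ k := le_mul_of_one_le_right hxpos.le (one_le_pow₀ hr1)
      have hmono : x * r ^ k ≤ x * r ^ (k+1) := by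
        apply mul_le_mul_of_nonneg_left _ hxpos.le
        exact pow_le_pow_right₀ hr1 (Nat.le_succ k)
      have := hstep (x * r ^ k) (x * r ^ (k+1)) hxk hmono
      have hratio : (x * r ^ (k+1)) / (x * r ^ k) = r := by
        field_simp; ring
      rw [hratio, hlogr] at this
      have heq : L (x * r ^ k) * (1 + (-(β * z)) / n) =
          L (x * r ^ k) - β * L (x * r ^ k) * (z / n) := by ring
      linarith
    have ind : ∀ k : ℕ, L x * (1 + (-(β * z)) / n) ^ k ≤ L (x * r ^ k) := by
      intro k
      induction k with
      | zero => simp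
      | succ k ih =>
        calc L x * (1 + (-(β * z)) / n) ^ (k+1)
            = (L x * (1 + (-(β * z)) / n) ^ k) * (1 + (-(β * z)) / n) := by ring
          _ ≤ L (x * r ^ k) * (1 + (-(β * z)) / n) :=
              mul_le_mul_of_nonneg_right ih hq.le
          _ ≤ L (x * r ^ (k+1)) := step k
    have hxn : x * r ^ n = y := by
      have : r ^ (n:ℕ) = y / x := by
        rw [hrdef, ← Real.rpow_natCast ((y/x) ^ ((n:ℝ)⁻¹)) n, ← Real.rpow_mul (by positivity)]
        rw [inv_mul_cancel₀ (ne_of_gt hnpos), Real.rpow_one]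
      rw [this]; field_simp
    have := ind n
    rwa [hxn] at this
  have hlim : Tendsto (fun n : ℕ => L x * (1 + (-(β * z)) / n) ^ n) atTop
      (𝓝 (L x * Real.exp (-(β * z)))) :=
    Tendsto.const_mul _ (Real.tendsto_one_add_div_pow_exp (-(β * z)))
  have hev : ∀ᶠ n : ℕ in atTop, L x * (1 + (-(β * z)) / n) ^ n ≤ L y := by
    have htail : ∀ᶠ n : ℕ in atTop, (β * z) < n := by
      obtain ⟨N, hN⟩ := exists_nat_gt (β * z)
      filter_upwards [eventually_ge_atTop N] with n hn
      exact lt_of_lt_of_le hN (by exact_mod_cast hn)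
    filter_upwards [eventually_ge_atTop 1, htail] with n hn hn2
    have hnpos : (0:ℝ) < n := by exact_mod_cast hn
    have hq : 0 < 1 + (-(β * z)) / n := by
      rw [neg_div]
      have : β * z / n < 1 := by
        rw [div_lt_one hnpos]; exact hn2
      linarith
    exact key n hn hq
  have hle : L x * Real.exp (-(β * z)) ≤ L y := le_of_tendsto hlim hev
  have : Real.exp (-(β * z)) = (y/x) ^ (-β) := by
    rw [Real.rpow_def_of_pos (by positivity), hz]; ring_nf
  rwa [this] at hle




set_option maxHeartbeats 1600000 in
/-- If `α` is DGMRD with `γ = lim_{x→∞} e(x)` where `e(x) = m(x)/x`, then for every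
`β > 0`: `γ < 1/β` iff `E[α^(β+1)] < ∞`. -/
theorem stmt8 {Ω : Type*} [MeasurableSpace Ω] (μ : Measure Ω) [IsProbabilityMeasure μ]
    (α : Ω → ℝ) (hαmeas : Measurable α)
    (hval : ∀ᵐ ω ∂μ, 0 ≤ α ω)
    (hαint : Integrable α μ)
    (F : ℝ → ℝ)
    (hF : ∀ x : ℝ, F x = (μ {ω | α ω ≤ x}).toReal)
    (hFbar : ∀ x : ℝ, 0 ≤ x → 0 < 1 - F x)
    (hDGMRD : ∀ x y : ℝ, 0 < x → x ≤ y → mrd F y / y ≤ mrd F x / x)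
    (γ : ℝ) (hγ : Tendsto (fun x : ℝ => mrd F x / x) atTop (𝓝 γ))
    (β : ℝ) (hβ : 0 < β) :
    γ < 1 / β ↔ Integrable (fun ω => α ω ^ (β + 1)) μ := by
  set Fb : ℝ → ℝ := fun u => 1 - F u with hFbdef
  -- basic facts about Fb
  have hμfin : ∀ x : ℝ, μ {ω | α ω ≤ x} ≠ ⊤ := fun x => measure_ne_top μ _
  have hFb_ofReal : ∀ x : ℝ, ENNReal.ofReal (Fb x) = μ {ω | x < α ω} := by
    intro x
    have hms : MeasurableSet {ω | α ω ≤ x} := hαmeas measurableSet_Iic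
    have hcompl : {ω | x < α ω} = {ω | α ω ≤ x}ᶜ := by
      ext ω; simp [not_le]
    rw [hcompl, prob_compl_eq_one_sub hms]
    rw [hFbdef]
    simp only [hF x]
    rw [ENNReal.ofReal_sub _ ENNReal.toReal_nonneg, ENNReal.ofReal_one,
      ENNReal.ofReal_toReal (hμfin x)]
  have hFb_nonneg : ∀ x : ℝ, 0 ≤ Fb x := by
    intro x
    have h1 : (μ {ω | α ω ≤ x}).toReal ≤ 1 := by
      have := prob_le_one (μ := μ) (s := {ω | α ω ≤ x})
      exact ENNReal.toReal_le_of_le_ofReal one_pos.le (by simpa using this)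
    simp only [hFbdef, hF x]
    linarith
  have hFb_le_one : ∀ x : ℝ, Fb x ≤ 1 := by
    intro x
    simp only [hFbdef, hF x]
    have : (0:ℝ) ≤ (μ {ω | α ω ≤ x}).toReal := ENNReal.toReal_nonneg
    linarith
  have hF_mono : Monotone F := by
    intro x y hxy
    simp only [hF]
    exact ENNReal.toReal_mono (hμfin y) (measure_mono (fun ω hω => le_trans hω hxy))
  have hFb_anti : Antitone Fb := fun x y hxy => by
    simp only [hFbdef]; linarith [hF_mono hxy]
  have hFb_meas : Measurable Fb := (measurable_const.sub hF_mono.measurable)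
  -- integrability of Fb on (0, ∞)
  have hαlint : ∫⁻ t in Ioi (0:ℝ), μ {ω | t < α ω} < ⊤ := by
    rw [← lintegral_eq_lintegral_meas_lt μ hval hαmeas.aemeasurable]
    exact hαint.lintegral_lt_top
  have hFb_int0 : IntegrableOn Fb (Ioi (0:ℝ)) := by
    refine ⟨(hFb_meas.aestronglyMeasurable).restrict, ?_⟩
    rw [hasFiniteIntegral_iff_norm]
    have : ∀ t : ℝ, ENNReal.ofReal ‖Fb t‖ = μ {ω | t < α ω} := by
      intro t
      rw [Real.norm_of_nonneg (hFb_nonneg t), hFb_ofReal t]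
    calc ∫⁻ t in Ioi (0:ℝ), ENNReal.ofReal ‖Fb t‖
        = ∫⁻ t in Ioi (0:ℝ), μ {ω | t < α ω} := by
          exact lintegral_congr (fun t => this t)
      _ < ⊤ := hαlint
  set L : ℝ → ℝ := fun x => ∫ u in Ioi x, Fb u with hLdef
  have hmrd_eq : ∀ x : ℝ, mrd F x = L x / Fb x := fun x => rfl
  have hFb_intx : ∀ x : ℝ, 0 < x → IntegrableOn Fb (Ioi x) := fun x hx =>
    hFb_int0.mono_set (Ioi_subset_Ioi hx.le)
  have hFb_intIoc : ∀ x y : ℝ, 0 < x → IntegrableOn Fb (Ioc x y) := fun x y hx =>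
    hFb_int0.mono_set (fun t ht => lt_trans hx ht.1)
  have hsplit : ∀ x y : ℝ, 0 < x → x ≤ y → L x = (∫ u in Ioc x y, Fb u) + L y := by
    intro x y hx hxy
    simp only [hLdef]
    rw [← setIntegral_union (Ioc_disjoint_Ioi le_rfl) measurableSet_Ioi
      (hFb_intIoc x y hx) (hFb_intx y (lt_of_lt_of_le hx hxy)),
      Ioc_union_Ioi_eq_Ioi hxy]
  have hL_nonneg : ∀ x : ℝ, 0 < x → 0 ≤ L x := fun x hx =>
    setIntegral_nonneg measurableSet_Ioi (fun u _ => hFb_nonneg u)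
  have hL_anti : ∀ x y : ℝ, 0 < x → x ≤ y → L y ≤ L x := by
    intro x y hx hxy
    rw [hsplit x y hx hxy]
    have : 0 ≤ ∫ u in Ioc x y, Fb u :=
      setIntegral_nonneg measurableSet_Ioc (fun u _ => hFb_nonneg u)
    linarith
  have hIoc_const_le : ∀ x y : ℝ, 0 < x → x ≤ y → 0 ≤ y →
      Fb y * (y - x) ≤ ∫ u in Ioc x y, Fb u := by
    intro x y hx hxy hy
    have h1 : ∫ u in Ioc x y, Fb y ≤ ∫ u in Ioc x y, Fb u := by
      apply setIntegral_mono_on (integrableOn_const measure_Ioc_lt_top.ne)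
        (hFb_intIoc x y hx) measurableSet_Ioc
      intro u hu
      exact hFb_anti hu.2
    rw [setIntegral_const] at h1
    rw [Real.volume_real_Ioc_of_le hxy, smul_eq_mul] at h1
    linarith [h1]
  have hL_pos : ∀ x : ℝ, 0 < x → 0 < L x := by
    intro x hx
    have h1 := hIoc_const_le x (x+1) hx (by linarith) (by linarith)
    have h2 := hsplit x (x+1) hx (by linarith)
    have h3 := hL_nonneg (x+1) (by linarith)
    have h4 : 0 < Fb (x+1) := hFbar (x+1) (by linarith)
    have : 0 < Fb (x+1) * (x + 1 - x) := by nlinarith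
    linarith
  have hFb_pos : ∀ x : ℝ, 0 ≤ x → 0 < Fb x := fun x hx => hFbar x hx
  -- e(x) ≥ γ for x > 0
  have he_ge : ∀ x : ℝ, 0 < x → γ ≤ mrd F x / x := by
    intro x hx
    refine le_of_tendsto hγ ?_
    filter_upwards [eventually_ge_atTop x] with y hy
    exact hDGMRD x y hx hy
  have hγ_nonneg : 0 ≤ γ := by
    refine ge_of_tendsto hγ ?_
    filter_upwards [eventually_ge_atTop (1:ℝ)] with y hy
    have hy0 : (0:ℝ) < y := lt_of_lt_of_le one_pos hy
    rw [hmrd_eq]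
    exact div_nonneg (div_nonneg (hL_nonneg y hy0) (hFb_pos y hy0.le).le) hy0.le
  -- reduction to the tail integral J
  set J : ENNReal := ∫⁻ t in Ioi (0:ℝ), ENNReal.ofReal (Fb t * t ^ β) with hJdef
  have hlayer : ∫⁻ ω, ENNReal.ofReal (α ω ^ (β+1)) ∂μ = ENNReal.ofReal (β+1) * J := by
    rw [lintegral_rpow_eq_lintegral_meas_lt_mul μ hval hαmeas.aemeasurable
      (by linarith : (0:ℝ) < β + 1), hJdef]
    congr 1
    rw [show (β + 1) - 1 = β by ring]
    refine setLIntegral_congr_fun measurableSet_Ioi (fun t ht => ?_)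
    rw [← hFb_ofReal t, ← ENNReal.ofReal_mul (hFb_nonneg t)]
  have haesm : AEStronglyMeasurable (fun ω => α ω ^ (β+1)) μ :=
    (((continuous_id.rpow_const (fun x => Or.inr (by linarith : (0:ℝ) ≤ β + 1))).measurable).comp
      hαmeas).aestronglyMeasurable
  have hint_iff : Integrable (fun ω => α ω ^ (β+1)) μ ↔ J < ⊤ := by
    constructor
    · intro h
      have h2 := h.lintegral_lt_top
      rw [hlayer] at h2
      by_contra htop
      rw [not_lt, top_le_iff] at htop
      rw [htop, ENNReal.mul_top (by simp [ENNReal.ofReal_eq_zero]; linarith)] at h2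
      exact (lt_irrefl _ h2).elim
    · intro h
      refine ⟨haesm, ?_⟩
      rw [hasFiniteIntegral_iff_norm]
      have heq : ∫⁻ ω, ENNReal.ofReal ‖α ω ^ (β+1)‖ ∂μ
          = ∫⁻ ω, ENNReal.ofReal (α ω ^ (β+1)) ∂μ := by
        refine lintegral_congr_ae ?_
        filter_upwards [hval] with ω hω
        rw [Real.norm_of_nonneg (Real.rpow_nonneg hω _)]
      rw [heq, hlayer]
      exact ENNReal.mul_lt_top ENNReal.ofReal_lt_top h
  rw [hint_iff]
  constructor
  · -- γ < 1/β → J < ⊤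
    intro hγβ
    have h1β : 0 < 1/β := by positivity
    set δ : ℝ := (γ + 1/β)/2 with hδdef
    have hδpos : 0 < δ := by rw [hδdef]; linarith
    have hγδ : γ < δ := by rw [hδdef]; linarith
    have hδβ : δ < 1/β := by rw [hδdef]; linarith
    obtain ⟨x1, hx1⟩ := eventually_atTop.1 (hγ.eventually_lt_const hγδ)
    set x0 : ℝ := max x1 1 with hx0def
    have hx0_pos : (0:ℝ) < x0 := lt_of_lt_of_le one_pos (le_max_right _ _)
    have hbound : ∀ u : ℝ, x0 ≤ u → L u ≤ δ * u * Fb u := by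
      intro u hu
      have hu1 : (1:ℝ) ≤ u := le_trans (le_max_right _ _) hu
      have hupos : (0:ℝ) < u := lt_of_lt_of_le one_pos hu1
      have h := hx1 u (le_trans (le_max_left _ _) hu)
      rw [hmrd_eq, div_div] at h
      have hfb := hFb_pos u hupos.le
      have h2 := (div_lt_iff₀ (mul_pos hfb hupos)).1 h
      calc L u ≤ δ * (Fb u * u) := h2.le
        _ = δ * u * Fb u := by ring
    have hstep : ∀ x y : ℝ, x0 ≤ x → x ≤ y → L y * (1 + Real.log (y / x) / δ) ≤ L x := by
      intro x y hx hxy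
      have hxpos : 0 < x := lt_of_lt_of_le hx0_pos hx
      have hypos : 0 < y := lt_of_lt_of_le hxpos hxy
      have hIoc : (L y / δ) * Real.log (y/x) ≤ ∫ u in Ioc x y, Fb u := by
        have hii : IntervalIntegrable (fun u : ℝ => u⁻¹) volume x y := by
          apply intervalIntegral.intervalIntegrable_inv (f := fun u : ℝ => u) _ continuousOn_id
          intro u hu
          rw [uIcc_of_le hxy] at hu
          exact ne_of_gt (lt_of_lt_of_le hxpos hu.1)
        have hint1 : IntegrableOn (fun u : ℝ => (L y / δ) * u⁻¹) (Ioc x y) :=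
          ((intervalIntegrable_iff_integrableOn_Ioc_of_le hxy).1 hii).const_mul _
        have hcomp : ∀ u ∈ Ioc x y, (L y / δ) * u⁻¹ ≤ Fb u := by
          intro u hu
          have hupos : 0 < u := lt_trans hxpos hu.1
          have hb := hbound u (le_trans hx hu.1.le)
          have hLy : L y ≤ L u := hL_anti u y hupos hu.2
          have h2 : L y ≤ δ * u * Fb u := le_trans hLy hb
          rw [mul_inv_le_iff₀ hupos, div_le_iff₀ hδpos]
          calc L y ≤ δ * u * Fb u := h2
            _ = Fb u * u * δ := by ring
        have h1 : (∫ u in Ioc x y, (L y / δ) * u⁻¹) ≤ ∫ u in Ioc x y, Fb u :=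
          setIntegral_mono_on hint1 (hFb_intIoc x y hxpos) measurableSet_Ioc hcomp
        have h2 : (∫ u in Ioc x y, (L y / δ) * u⁻¹) = (L y / δ) * Real.log (y/x) := by
          rw [MeasureTheory.integral_const_mul]
          congr 1
          rw [← intervalIntegral.integral_of_le hxy, integral_inv_of_pos hxpos hypos]
        linarith
      have hs := hsplit x y hxpos hxy
      have hz : L y * (1 + Real.log (y/x) / δ) = L y + (L y / δ) * Real.log (y/x) := by ring
      linarith
    have hiter := iter_upper L x0 δ hx0_pos hδpos hstep
    have hA : (0:ℝ) < 2 * x0 := by linarith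
    set C : ℝ := 2 * L x0 * (2 * x0) ^ (1/δ) with hCdef
    have htail : ∀ t : ℝ, 2 * x0 ≤ t → Fb t ≤ C * t ^ (-(1 + 1/δ)) := by
      intro t ht
      have htpos : 0 < t := lt_of_lt_of_le hA ht
      have h2 : x0 ≤ t/2 := by linarith
      have hhalfpos : 0 < t/2 := lt_of_lt_of_le hx0_pos h2
      have hfb2 : Fb t * (t - t/2) ≤ ∫ u in Ioc (t/2) t, Fb u :=
        hIoc_const_le (t/2) t hhalfpos (by linarith) htpos.le
      have hle : (∫ u in Ioc (t/2) t, Fb u) ≤ L (t/2) := by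
        have hs := hsplit (t/2) t hhalfpos (by linarith)
        have hn := hL_nonneg t htpos
        linarith
      have hit := hiter x0 (t/2) le_rfl h2
      -- key product bound
      have hrpos : (0:ℝ) < ((t/2)/x0) ^ (1/δ) := Real.rpow_pos_of_pos (by positivity) _
      have hkey : Fb t * (t/2) * ((t/2)/x0) ^ (1/δ) ≤ L x0 := by
        calc Fb t * (t/2) * ((t/2)/x0) ^ (1/δ) ≤ L (t/2) * ((t/2)/x0) ^ (1/δ) := by
              apply mul_le_mul_of_nonneg_right _ hrpos.le
              calc Fb t * (t/2) = Fb t * (t - t/2) := by ring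
                _ ≤ _ := hfb2
                _ ≤ L (t/2) := hle
          _ ≤ L x0 := hit
      -- algebra: rewrite the power
      have halg : C * t ^ (-(1 + 1/δ)) = 2 * L x0 / (t * ((t/2)/x0) ^ (1/δ)) := by
        have e1 : (t/2)/x0 = t / (2 * x0) := by field_simp
        rw [hCdef, e1, Real.div_rpow htpos.le (by positivity), Real.rpow_neg htpos.le,
          Real.rpow_add htpos, Real.rpow_one]
        have h1 : (0:ℝ) < t ^ (1/δ) := Real.rpow_pos_of_pos htpos _
        have h2' : (0:ℝ) < (2 * x0) ^ (1/δ) := Real.rpow_pos_of_pos hA _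
        field_simp
      rw [halg]
      rw [le_div_iff₀ (by positivity)]
      calc Fb t * (t * ((t/2)/x0) ^ (1/δ)) = 2 * (Fb t * (t/2) * ((t/2)/x0) ^ (1/δ)) := by ring
        _ ≤ 2 * L x0 := by linarith
    -- split J
    have hJsplit : J = (∫⁻ t in Ioc 0 (2*x0), ENNReal.ofReal (Fb t * t ^ β))
        + ∫⁻ t in Ioi (2*x0), ENNReal.ofReal (Fb t * t ^ β) := by
      rw [hJdef, ← lintegral_union measurableSet_Ioi (Ioc_disjoint_Ioi le_rfl),
        Ioc_union_Ioi_eq_Ioi hA.le]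
    have hpiece1 : (∫⁻ t in Ioc 0 (2*x0), ENNReal.ofReal (Fb t * t ^ β)) < ⊤ := by
      have hb : ∀ᵐ t ∂(volume.restrict (Ioc 0 (2*x0))),
          ENNReal.ofReal (Fb t * t ^ β) ≤ ENNReal.ofReal ((2*x0) ^ β) := by
        filter_upwards [ae_restrict_mem measurableSet_Ioc] with t ht
        apply ENNReal.ofReal_le_ofReal
        calc Fb t * t ^ β ≤ 1 * (2*x0) ^ β := by
              apply mul_le_mul (hFb_le_one t) (Real.rpow_le_rpow ht.1.le ht.2 hβ.le)
                (Real.rpow_nonneg ht.1.le β) one_pos.le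
          _ = (2*x0) ^ β := one_mul _
      calc (∫⁻ t in Ioc 0 (2*x0), ENNReal.ofReal (Fb t * t ^ β))
          ≤ ∫⁻ _ in Ioc 0 (2*x0), ENNReal.ofReal ((2*x0) ^ β) := lintegral_mono_ae hb
        _ = ENNReal.ofReal ((2*x0) ^ β) * volume (Ioc 0 (2*x0)) := by
            rw [setLIntegral_const]
        _ < ⊤ := ENNReal.mul_lt_top ENNReal.ofReal_lt_top measure_Ioc_lt_top
    have hpiece2 : (∫⁻ t in Ioi (2*x0), ENNReal.ofReal (Fb t * t ^ β)) < ⊤ := by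
      have hexp : β - 1 - 1/δ < -1 := by
        have : β < 1/δ := by
          rw [lt_div_iff₀ hδpos]
          calc β * δ < β * (1/β) := by
                exact mul_lt_mul_of_pos_left hδβ hβ
            _ = 1 := by field_simp
        linarith
      have hg_int : IntegrableOn (fun t : ℝ => C * t ^ (β - 1 - 1/δ)) (Ioi (2*x0)) :=
        (integrableOn_Ioi_rpow_of_lt hexp hA).const_mul C
      have hb : ∀ᵐ t ∂(volume.restrict (Ioi (2*x0))),
          ENNReal.ofReal (Fb t * t ^ β) ≤ ENNReal.ofReal (C * t ^ (β - 1 - 1/δ)) := by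
        filter_upwards [ae_restrict_mem measurableSet_Ioi] with t ht
        have htpos : (0:ℝ) < t := lt_of_lt_of_le hA (le_of_lt ht)
        apply ENNReal.ofReal_le_ofReal
        calc Fb t * t ^ β ≤ (C * t ^ (-(1 + 1/δ))) * t ^ β := by
              exact mul_le_mul_of_nonneg_right (htail t ht.le) (Real.rpow_nonneg htpos.le β)
          _ = C * t ^ (β - 1 - 1/δ) := by
              rw [mul_assoc, ← Real.rpow_add htpos]
              ring_nf
      calc (∫⁻ t in Ioi (2*x0), ENNReal.ofReal (Fb t * t ^ β))
          ≤ ∫⁻ t in Ioi (2*x0), ENNReal.ofReal (C * t ^ (β - 1 - 1/δ)) := lintegral_mono_ae hb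
        _ < ⊤ := hg_int.lintegral_lt_top
    rw [hJsplit]
    exact ENNReal.add_lt_top.2 ⟨hpiece1, hpiece2⟩
  · -- J < ⊤ → γ < 1/β
    intro hJ
    by_contra hcon
    push_neg at hcon   -- hcon : 1/β ≤ γ
    have hbound : ∀ x : ℝ, 0 < x → Fb x * x ≤ β * L x := by
      intro x hx
      have h1 : (1:ℝ)/β ≤ mrd F x / x := le_trans hcon (he_ge x hx)
      rw [hmrd_eq, div_div] at h1
      have hfb := hFb_pos x hx.le
      rw [div_le_div_iff₀ hβ (mul_pos hfb hx)] at h1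
      linarith
    have hstep : ∀ x y : ℝ, (1:ℝ) ≤ x → x ≤ y → L x - L y ≤ β * L x * Real.log (y / x) := by
      intro x y hx hxy
      have hxpos : (0:ℝ) < x := lt_of_lt_of_le one_pos hx
      have hypos : 0 < y := lt_of_lt_of_le hxpos hxy
      have hii : IntervalIntegrable (fun u : ℝ => u⁻¹) volume x y := by
        apply intervalIntegral.intervalIntegrable_inv (f := fun u : ℝ => u) _ continuousOn_id
        intro u hu
        rw [uIcc_of_le hxy] at hu
        exact ne_of_gt (lt_of_lt_of_le hxpos hu.1)
      have hint1 : IntegrableOn (fun u : ℝ => (β * L x) * u⁻¹) (Ioc x y) :=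
        ((intervalIntegrable_iff_integrableOn_Ioc_of_le hxy).1 hii).const_mul _
      have hcomp : ∀ u ∈ Ioc x y, Fb u ≤ (β * L x) * u⁻¹ := by
        intro u hu
        have hupos : 0 < u := lt_trans hxpos hu.1
        have hb := hbound u hupos
        have hLu : L u ≤ L x := hL_anti x u hxpos hu.1.le
        have hβL : β * L u ≤ β * L x := mul_le_mul_of_nonneg_left hLu hβ.le
        rw [show (β * L x) * u⁻¹ = (β * L x)/u from (div_eq_mul_inv _ _).symm,
          le_div_iff₀ hupos]
        linarith
      have h1 : (∫ u in Ioc x y, Fb u) ≤ ∫ u in Ioc x y, (β * L x) * u⁻¹ :=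
        setIntegral_mono_on (hFb_intIoc x y hxpos) hint1 measurableSet_Ioc hcomp
      have h2 : (∫ u in Ioc x y, (β * L x) * u⁻¹) = (β * L x) * Real.log (y/x) := by
        rw [MeasureTheory.integral_const_mul]
        congr 1
        rw [← intervalIntegral.integral_of_le hxy, integral_inv_of_pos hxpos hypos]
      have hs := hsplit x y hxpos hxy
      linarith
    have hLnn' : ∀ x : ℝ, (1:ℝ) ≤ x → 0 ≤ L x := fun x hx =>
      hL_nonneg x (lt_of_lt_of_le one_pos hx)
    have hiter := iter_lower L 1 β one_pos hβ hLnn' hstep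
    have hc : 0 < L 1 := hL_pos 1 one_pos
    have hLlow : ∀ y : ℝ, 1 ≤ y → L 1 * y ^ (-β) ≤ L y := by
      intro y hy
      have h := hiter 1 y le_rfl hy
      rwa [div_one] at h
    have hg_meas : Measurable (fun t : ℝ => Fb t * t ^ β) :=
      hFb_meas.mul (continuous_id.rpow_const (fun x => Or.inr hβ.le)).measurable
    have hg_int : IntegrableOn (fun t : ℝ => Fb t * t ^ β) (Ioi 1) := by
      refine ⟨hg_meas.aestronglyMeasurable.restrict, ?_⟩
      rw [hasFiniteIntegral_iff_norm]
      have heq : (∫⁻ t in Ioi (1:ℝ), ENNReal.ofReal ‖Fb t * t ^ β‖)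
          = ∫⁻ t in Ioi (1:ℝ), ENNReal.ofReal (Fb t * t ^ β) := by
        refine lintegral_congr_ae ?_
        filter_upwards [ae_restrict_mem measurableSet_Ioi] with t ht
        have h0t : (0:ℝ) ≤ t := le_trans one_pos.le (le_of_lt ht)
        rw [Real.norm_of_nonneg (mul_nonneg (hFb_nonneg t) (Real.rpow_nonneg h0t β))]
      rw [heq]
      calc (∫⁻ t in Ioi (1:ℝ), ENNReal.ofReal (Fb t * t ^ β))
          ≤ J := by
            rw [hJdef]
            exact lintegral_mono_set (Ioi_subset_Ioi zero_le_one)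
        _ < ⊤ := hJ
    set V : ℝ := ∫ t in Ioi (1:ℝ), Fb t * t ^ β with hVdef
    have hg_nn_ae : 0 ≤ᵐ[volume.restrict (Ioi (1:ℝ))] fun t : ℝ => Fb t * t ^ β := by
      filter_upwards [ae_restrict_mem measurableSet_Ioi] with t ht
      exact mul_nonneg (hFb_nonneg t) (Real.rpow_nonneg (le_trans one_pos.le ht.le) β)
    have haN_le : ∀ x : ℝ, 1 ≤ x → (∫ t in Ioc 1 x, Fb t * t ^ β) ≤ V := fun x hx =>
      setIntegral_mono_set hg_int hg_nn_ae (HasSubset.Subset.eventuallyLE Ioc_subset_Ioi_self)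
    have hfact1 : ∀ x y : ℝ, 1 ≤ x → x ≤ y →
        x ^ β * (L x - L y) ≤ ∫ t in Ioc x y, Fb t * t ^ β := by
      intro x y hx hxy
      have hxpos : (0:ℝ) < x := lt_of_lt_of_le one_pos hx
      have hint2 : IntegrableOn (fun t : ℝ => Fb t * x ^ β) (Ioc x y) :=
        (hFb_intIoc x y hxpos).mul_const _
      have hintg : IntegrableOn (fun t : ℝ => Fb t * t ^ β) (Ioc x y) :=
        hg_int.mono_set (fun t ht => lt_of_le_of_lt hx ht.1)
      have h1 : (∫ t in Ioc x y, Fb t * x ^ β) ≤ ∫ t in Ioc x y, Fb t * t ^ β := by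
        apply setIntegral_mono_on hint2 hintg measurableSet_Ioc
        intro t ht
        exact mul_le_mul_of_nonneg_left
          (Real.rpow_le_rpow hxpos.le ht.1.le hβ.le) (hFb_nonneg t)
      have hs := hsplit x y hxpos hxy
      have h2 : (∫ t in Ioc x y, Fb t * x ^ β) = (L x - L y) * x ^ β := by
        rw [MeasureTheory.integral_mul_const,
          show (∫ t in Ioc x y, Fb t) = L x - L y from by linarith]
      calc x ^ β * (L x - L y) = (L x - L y) * x ^ β := by ring
        _ = ∫ t in Ioc x y, Fb t * x ^ β := h2.symm
        _ ≤ _ := h1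
    have hfact2 : ∀ y : ℝ, 1 ≤ y → y ^ β * L y ≤ V := by
      intro y hy
      have hypos : (0:ℝ) < y := lt_of_lt_of_le one_pos hy
      have hint3 : IntegrableOn (fun t : ℝ => Fb t * y ^ β) (Ioi y) :=
        (hFb_intx y hypos).mul_const _
      have hintg : IntegrableOn (fun t : ℝ => Fb t * t ^ β) (Ioi y) :=
        hg_int.mono_set (Ioi_subset_Ioi hy)
      have h1 : (∫ t in Ioi y, Fb t * y ^ β) ≤ ∫ t in Ioi y, Fb t * t ^ β := by
        apply setIntegral_mono_on hint3 hintg measurableSet_Ioi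
        intro t ht
        exact mul_le_mul_of_nonneg_left
          (Real.rpow_le_rpow hypos.le (le_of_lt ht) hβ.le) (hFb_nonneg t)
      have h2 : (∫ t in Ioi y, Fb t * y ^ β) = L y * y ^ β := by
        rw [MeasureTheory.integral_mul_const]
      have h3 : (∫ t in Ioi y, Fb t * t ^ β) ≤ V :=
        setIntegral_mono_set hg_int hg_nn_ae
          (HasSubset.Subset.eventuallyLE (Ioi_subset_Ioi hy))
      calc y ^ β * L y = L y * y ^ β := by ring
        _ = ∫ t in Ioi y, Fb t * y ^ β := h2.symm
        _ ≤ ∫ t in Ioi y, Fb t * t ^ β := h1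
        _ ≤ V := h3
    -- the dyadic induction
    set ε : ℝ := (1 - (2:ℝ) ^ (-β)) * L 1 with hεdef
    have h2βlt : (2:ℝ) ^ (-β) < 1 :=
      Real.rpow_lt_one_of_one_lt_of_neg one_lt_two (by linarith)
    have h2βpos : (0:ℝ) < (2:ℝ) ^ (-β) := Real.rpow_pos_of_pos two_pos _
    have hεpos : 0 < ε := mul_pos (by linarith) hc
    have hx1' : ∀ N : ℕ, (1:ℝ) ≤ (2:ℝ) ^ N := fun N => one_le_pow₀ one_le_two
    have hxpos' : ∀ N : ℕ, (0:ℝ) < (2:ℝ) ^ N := fun N => pow_pos two_pos N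
    set v : ℕ → ℝ := fun N => (∫ t in Ioc 1 ((2:ℝ) ^ N), Fb t * t ^ β)
      + (2:ℝ) ^ (-β) * (((2:ℝ) ^ N) ^ β * L ((2:ℝ) ^ N)) with hvdef
    have hPle : ∀ N : ℕ, L 1 ≤ ((2:ℝ) ^ N) ^ β * L ((2:ℝ) ^ N) := by
      intro N
      have h := hLlow ((2:ℝ) ^ N) (hx1' N)
      have hp : (0:ℝ) < ((2:ℝ) ^ N) ^ β := Real.rpow_pos_of_pos (hxpos' N) _
      calc L 1 = (L 1 * ((2:ℝ) ^ N) ^ (-β)) * ((2:ℝ) ^ N) ^ β := by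
            rw [mul_assoc, ← Real.rpow_add (hxpos' N)]
            simp
        _ ≤ L ((2:ℝ) ^ N) * ((2:ℝ) ^ N) ^ β := mul_le_mul_of_nonneg_right h hp.le
        _ = ((2:ℝ) ^ N) ^ β * L ((2:ℝ) ^ N) := by ring
    have hgrow : ∀ N : ℕ, v N + ε ≤ v (N+1) := by
      intro N
      have hxN := hx1' N
      have hxNpos := hxpos' N
      have hmono : (2:ℝ) ^ N ≤ (2:ℝ) ^ (N+1) :=
        pow_le_pow_right₀ one_le_two (Nat.le_succ N)
      have hintg1 : IntegrableOn (fun t : ℝ => Fb t * t ^ β) (Ioc 1 ((2:ℝ) ^ N)) :=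
        hg_int.mono_set Ioc_subset_Ioi_self
      have hintg2 : IntegrableOn (fun t : ℝ => Fb t * t ^ β) (Ioc ((2:ℝ) ^ N) ((2:ℝ) ^ (N+1))) :=
        hg_int.mono_set (fun t ht => lt_of_le_of_lt hxN ht.1)
      have hsplitInt : (∫ t in Ioc 1 ((2:ℝ) ^ (N+1)), Fb t * t ^ β)
          = (∫ t in Ioc 1 ((2:ℝ) ^ N), Fb t * t ^ β)
            + ∫ t in Ioc ((2:ℝ) ^ N) ((2:ℝ) ^ (N+1)), Fb t * t ^ β := by
        rw [← setIntegral_union (Set.Ioc_disjoint_Ioc_of_le le_rfl) measurableSet_Ioc hintg1 hintg2,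
          Ioc_union_Ioc_eq_Ioc hxN hmono]
      have hΔ := hfact1 ((2:ℝ) ^ N) ((2:ℝ) ^ (N+1)) hxN hmono
      have h2m : (2:ℝ) ^ (-β) * (((2:ℝ) ^ (N+1)) ^ β) = ((2:ℝ) ^ N) ^ β := by
        have hone : (2:ℝ) ^ (-β) * (2:ℝ) ^ β = 1 := by
          rw [← Real.rpow_add two_pos]; simp
        rw [pow_succ, Real.mul_rpow (hxpos' N).le two_pos.le]
        calc (2:ℝ) ^ (-β) * (((2:ℝ) ^ N) ^ β * (2:ℝ) ^ β)
            = ((2:ℝ) ^ N) ^ β * ((2:ℝ) ^ (-β) * (2:ℝ) ^ β) := by ring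
          _ = ((2:ℝ) ^ N) ^ β := by rw [hone, mul_one]
      have hPN := hPle N
      have hεle : ε ≤ (1 - (2:ℝ) ^ (-β)) * (((2:ℝ) ^ N) ^ β * L ((2:ℝ) ^ N)) := by
        rw [hεdef]
        exact mul_le_mul_of_nonneg_left hPN (by linarith)
      -- assemble
      have hvN1 : v (N+1) = (∫ t in Ioc 1 ((2:ℝ) ^ N), Fb t * t ^ β)
          + (∫ t in Ioc ((2:ℝ) ^ N) ((2:ℝ) ^ (N+1)), Fb t * t ^ β)
          + ((2:ℝ) ^ N) ^ β * L ((2:ℝ) ^ (N+1)) := by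
        rw [hvdef]
        simp only []
        rw [hsplitInt,
          show (2:ℝ) ^ (-β) * (((2:ℝ) ^ (N+1)) ^ β * L ((2:ℝ) ^ (N+1)))
            = ((2:ℝ) ^ (-β) * ((2:ℝ) ^ (N+1)) ^ β) * L ((2:ℝ) ^ (N+1)) from by ring, h2m]
      rw [hvN1, hvdef]
      simp only []
      nlinarith [hΔ, hεle]
    have hvgrow : ∀ N : ℕ, v 0 + N * ε ≤ v N := by
      intro N
      induction N with
      | zero => simp
      | succ N ih =>
        have := hgrow N
        push_cast
        push_cast at ih
        linarith
    have hv0 : 0 ≤ v 0 := by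
      rw [hvdef]
      simp only [pow_zero, Set.Ioc_self, Measure.restrict_empty]
      rw [MeasureTheory.integral_zero_measure]
      have : (0:ℝ) ≤ (1:ℝ) ^ β * L 1 := mul_nonneg (Real.rpow_nonneg one_pos.le β) hc.le
      nlinarith [h2βpos]
    have hvle : ∀ N : ℕ, v N ≤ V + V := by
      intro N
      have h1 := haN_le ((2:ℝ) ^ N) (hx1' N)
      have h2 := hfact2 ((2:ℝ) ^ N) (hx1' N)
      have hPnn : (0:ℝ) ≤ ((2:ℝ) ^ N) ^ β * L ((2:ℝ) ^ N) :=
        mul_nonneg (Real.rpow_nonneg (hxpos' N).le β) (hLnn' _ (hx1' N))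
      have h3 : (2:ℝ) ^ (-β) * (((2:ℝ) ^ N) ^ β * L ((2:ℝ) ^ N)) ≤ 1 * V :=
        mul_le_mul h2βlt.le h2 hPnn one_pos.le
      rw [hvdef]
      simp only []
      linarith
    obtain ⟨N, hN⟩ := exists_nat_gt ((V + V) / ε)
    have hup : (N:ℝ) * ε ≤ V + V := by
      have := hvgrow N
      have := hvle N
      linarith
    have hlo : V + V < (N:ℝ) * ε := by
      rw [div_lt_iff₀ hεpos] at hN
      linarith
    linarith
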